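/- Let K ≥ 1, θ̄ > 0, α_1,…,α_K > 0 with Σ_k α_k = 1, and for each k let F_k : [0, θ̄] → [0,1] be a continuously differentiable CDF with F_k(0) = 0, F_k(θ̄) = 1 and density f_k = F_k′, such that each profit function π_k(p) = p·(1 − F_k(p)) is concave on [0, θ̄]. Define the optimal sequential-screening profit with ex-post participation constraints as Π^seq = sup of Σ_k α_k·( −u_k + ∫_0^{θ̄} x_k(z)·(z·f_k(z) − (1 − F_k(z))) dz ) over all u_1,…,u_K ≥ 0 and nondecreasing x_1,…,x_K : [0, θ̄] → [0,1] satisfying the interim incentive constraints u_k + ∫_0^{θ̄} x_k(z)·(1 − F_k(z)) dz ≥ u_{k′} + ∫_0^{θ̄} x_{k′}(z)·(1 − F_k(z)) dz for all k, k′. Then the optimal static (uniform-price) profit Π^U = sup_{p ∈ [0,θ̄]} Σ_k α_k·p·(1 − F_k(p)) satisfies Π^U ≥ (1/2)·Π^seq; i.e., the optimal static contract is a 1/2-approximation of the optimal sequential screening mechanism. -/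

import Mathlib

open intervalIntegral

section Aux

lemma half_point_lemma (θ : ℝ) (hθ : 0 < θ) (F : ℝ → ℝ)
    (hF0 : F 0 = 0) (hF1 : F θ = 1)
    (hFrange : ∀ z ∈ Set.Icc (0:ℝ) θ, F z ∈ Set.Icc (0:ℝ) 1)
    (hconc : ConcaveOn ℝ (Set.Icc 0 θ) (fun p => p * (1 - F p)))
    (q : ℝ) (hq : q ∈ Set.Icc (0:ℝ) θ) :
    q * (1 - F q) ≤ 2 * ((θ/2) * (1 - F (θ/2))) := by
  have h0mem : (0:ℝ) ∈ Set.Icc (0:ℝ) θ := ⟨le_rfl, hθ.le⟩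
  have hθmem : θ ∈ Set.Icc (0:ℝ) θ := ⟨hθ.le, le_rfl⟩
  have hπq : 0 ≤ q * (1 - F q) := by
    have := hFrange q hq
    have h1 : 0 ≤ 1 - F q := by linarith [this.2]
    exact mul_nonneg hq.1 h1
  rcases le_or_gt (θ/2) q with hcase | hcase
  · have hqpos : 0 < q := lt_of_lt_of_le (by linarith) hcase
    set t : ℝ := θ / (2 * q) with ht_def
    have ht0 : 0 ≤ t := by positivity
    have ht1 : t ≤ 1 := by
      rw [ht_def, div_le_one (by linarith)]
      linarith
    have hcomb := hconc.2 hq h0mem ht0 (by linarith : (0:ℝ) ≤ 1 - t) (by ring)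
    have harg : t • q + (1 - t) • (0:ℝ) = θ/2 := by
      simp only [smul_eq_mul, mul_zero, add_zero, ht_def]
      field_simp
    rw [harg] at hcomb
    simp only [smul_eq_mul, hF0, mul_zero, sub_zero, mul_one, add_zero] at hcomb
    have ht_half : 1/2 ≤ t := by
      rw [ht_def, le_div_iff₀ (by linarith)]
      linarith [hq.2]
    nlinarith
  · have hden : 0 < θ - q := by linarith
    set t : ℝ := (θ/2) / (θ - q) with ht_def
    have ht0 : 0 ≤ t := by positivity
    have ht1 : t ≤ 1 := by
      rw [ht_def, div_le_one hden]
      linarith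
    have hcomb := hconc.2 hq hθmem ht0 (by linarith : (0:ℝ) ≤ 1 - t) (by ring)
    have harg : t • q + (1 - t) • θ = θ/2 := by
      simp only [smul_eq_mul, ht_def]
      field_simp
      ring
    rw [harg] at hcomb
    simp only [smul_eq_mul, hF1, sub_self, mul_zero] at hcomb
    have ht_half : 1/2 ≤ t := by
      rw [ht_def, le_div_iff₀ hden]
      linarith [hq.1]
    nlinarith

lemma key_integral_bound (θ : ℝ) (hθ : 0 < θ) (F f x : ℝ → ℝ)
    (hF0 : F 0 = 0) (hF1 : F θ = 1)
    (hderiv : ∀ z ∈ Set.Icc (0:ℝ) θ, HasDerivAt F (f z) z)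
    (hfcont : ContinuousOn f (Set.Icc 0 θ))
    (hFrange : ∀ z ∈ Set.Icc (0:ℝ) θ, F z ∈ Set.Icc (0:ℝ) 1)
    (hconc : ConcaveOn ℝ (Set.Icc 0 θ) (fun p => p * (1 - F p)))
    (hx : MonotoneOn x (Set.Icc 0 θ))
    (hxr : ∀ z ∈ Set.Icc (0:ℝ) θ, x z ∈ Set.Icc (0:ℝ) 1) :
    (∫ z in (0:ℝ)..θ, x z * (z * f z - (1 - F z)))
      ≤ 2 * ((θ/2) * (1 - F (θ/2))) := by
  set π : ℝ → ℝ := fun p => p * (1 - F p) with hπ_def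
  set D : ℝ → ℝ := fun z => (1 - F z) - z * f z with hD_def
  have hπd : ∀ z ∈ Set.Icc (0:ℝ) θ, HasDerivAt π (D z) z := by
    intro z hz
    have h := (hasDerivAt_id z).mul ((hasDerivAt_const z (1:ℝ)).sub (hderiv z hz))
    exact h.congr_deriv (by simp only [hD_def, Pi.sub_apply, id]; ring)
  have hFcont : ContinuousOn F (Set.Icc 0 θ) :=
    fun z hz => ((hderiv z hz).continuousAt).continuousWithinAt
  have hDcont : ContinuousOn D (Set.Icc 0 θ) :=
    (continuousOn_const.sub hFcont).sub (continuousOn_id.mul hfcont)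
  have hanti : ∀ a ∈ Set.Icc (0:ℝ) θ, ∀ b ∈ Set.Icc (0:ℝ) θ, a ≤ b → D b ≤ D a := by
    intro a ha b hb hab
    have hd : ∀ z ∈ Set.Icc (0:ℝ) θ, DifferentiableAt ℝ π z :=
      fun z hz => (hπd z hz).differentiableAt
    have := hconc.antitoneOn_deriv hd ha hb hab
    rwa [(hπd a ha).deriv, (hπd b hb).deriv] at this
  set S0 : Set ℝ := {z ∈ Set.Icc (0:ℝ) θ | 0 < D z} with hS0_def
  have h0S0 : (0:ℝ) ∈ S0 := by
    constructor
    · exact ⟨le_rfl, hθ.le⟩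
    · simp [hD_def, hF0]
  have hS0ne : S0.Nonempty := ⟨0, h0S0⟩
  have hS0bdd : BddAbove S0 := ⟨θ, fun s hs => hs.1.2⟩
  set p : ℝ := sSup S0 with hp_def
  have hp0 : 0 ≤ p := le_csSup hS0bdd h0S0
  have hpθ : p ≤ θ := csSup_le hS0ne (fun s hs => hs.1.2)
  have hpmem : p ∈ Set.Icc (0:ℝ) θ := ⟨hp0, hpθ⟩
  have hleft : ∀ z ∈ Set.Icc (0:ℝ) θ, z < p → 0 ≤ D z := by
    intro z hz hzp
    obtain ⟨s, hsS0, hzs⟩ := exists_lt_of_lt_csSup hS0ne hzp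
    exact le_trans hsS0.2.le (hanti z hz s hsS0.1 hzs.le)
  have hright : ∀ z ∈ Set.Icc (0:ℝ) θ, p < z → D z ≤ 0 := by
    intro z hz hpz
    by_contra hcon
    push_neg at hcon
    exact absurd (le_csSup hS0bdd ⟨hz, hcon⟩) (not_le.mpr hpz)
  have huIcc : Set.uIcc (0:ℝ) θ = Set.Icc 0 θ := Set.uIcc_of_le hθ.le
  have hxint : IntervalIntegrable x MeasureTheory.volume 0 θ :=
    (huIcc ▸ hx : MonotoneOn x (Set.uIcc 0 θ)).intervalIntegrable
  have hmDcont : ContinuousOn (fun z => z * f z - (1 - F z)) (Set.Icc 0 θ) :=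
    (continuousOn_id.mul hfcont).sub (continuousOn_const.sub hFcont)
  have hgint : IntervalIntegrable (fun z => x z * (z * f z - (1 - F z)))
      MeasureTheory.volume 0 θ :=
    hxint.mul_continuousOn (huIcc ▸ hmDcont)
  have hsub1 : Set.uIcc (0:ℝ) p ⊆ Set.uIcc 0 θ := by
    rw [huIcc, Set.uIcc_of_le hp0]; exact Set.Icc_subset_Icc le_rfl hpθ
  have hsub2 : Set.uIcc p θ ⊆ Set.uIcc 0 θ := by
    rw [huIcc, Set.uIcc_of_le hpθ]; exact Set.Icc_subset_Icc hp0 le_rfl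
  have hgint1 := hgint.mono_set hsub1
  have hgint2 := hgint.mono_set hsub2
  have hmDint2 : IntervalIntegrable (fun z => z * f z - (1 - F z)) MeasureTheory.volume p θ :=
    (hmDcont.mono (by rw [Set.uIcc_of_le hpθ] at hsub2 ⊢; exact huIcc ▸ hsub2)).intervalIntegrable
  have hne : ∀ᵐ z : ℝ, z ≠ p := by
    rw [MeasureTheory.ae_iff]
    have : {z : ℝ | ¬ z ≠ p} = {p} := by ext z; simp
    rw [this]
    exact Real.volume_singleton
  have hpiece1 : (∫ z in (0:ℝ)..p, x z * (z * f z - (1 - F z))) ≤ 0 := by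
    have hmono := intervalIntegral.integral_mono_ae_restrict hp0 hgint1
      (_root_.intervalIntegrable_const (c := (0:ℝ)))
      (by
        filter_upwards [MeasureTheory.ae_restrict_of_ae hne,
          MeasureTheory.ae_restrict_mem measurableSet_Icc] with z hzne hz
        have hzIcc : z ∈ Set.Icc (0:ℝ) θ := ⟨hz.1, le_trans hz.2 hpθ⟩
        have hzp : z < p := lt_of_le_of_ne hz.2 hzne
        have hD : 0 ≤ D z := hleft z hzIcc hzp
        have hxz := hxr z hzIcc
        have : z * f z - (1 - F z) ≤ 0 := by simp [hD_def] at hD; linarith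
        exact mul_nonpos_of_nonneg_of_nonpos hxz.1 this)
    simpa using hmono
  have hpiece2 : (∫ z in p..θ, x z * (z * f z - (1 - F z))) ≤ π p := by
    have hmono := intervalIntegral.integral_mono_ae_restrict hpθ hgint2 hmDint2
      (by
        filter_upwards [MeasureTheory.ae_restrict_of_ae hne,
          MeasureTheory.ae_restrict_mem measurableSet_Icc] with z hzne hz
        have hzIcc : z ∈ Set.Icc (0:ℝ) θ := ⟨le_trans hp0 hz.1, hz.2⟩
        have hpz : p < z := lt_of_le_of_ne hz.1 (Ne.symm hzne)
        have hD : D z ≤ 0 := hright z hzIcc hpz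
        have hxz := hxr z hzIcc
        have hnn : 0 ≤ z * f z - (1 - F z) := by simp [hD_def] at hD; linarith
        nlinarith [hxz.1, hxz.2])
    have hftc : (∫ z in p..θ, (z * f z - (1 - F z))) = π p := by
      have hFTC : (∫ z in p..θ, D z) = π θ - π p := by
        apply intervalIntegral.integral_eq_sub_of_hasDerivAt
        · intro z hz
          exact hπd z (by rw [Set.uIcc_of_le hpθ] at hz; exact ⟨le_trans hp0 hz.1, hz.2⟩)
        · refine (hDcont.mono ?_).intervalIntegrable
          rw [Set.uIcc_of_le hpθ]
          exact Set.Icc_subset_Icc hp0 le_rfl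
      have hπθ : π θ = 0 := by simp [hπ_def, hF1]
      have hD2 : (∫ z in p..θ, (z * f z - (1 - F z))) = - ∫ z in p..θ, D z := by
        rw [← intervalIntegral.integral_neg]
        congr 1; ext z; simp [hD_def]
      rw [hD2, hFTC, hπθ]; ring
    linarith [hmono, hftc.le, hftc.ge]
  have hsplit : (∫ z in (0:ℝ)..θ, x z * (z * f z - (1 - F z)))
      = (∫ z in (0:ℝ)..p, x z * (z * f z - (1 - F z)))
        + (∫ z in p..θ, x z * (z * f z - (1 - F z))) :=
    (intervalIntegral.integral_add_adjacent_intervals hgint1 hgint2).symm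
  have hπp_le : π p ≤ 2 * ((θ/2) * (1 - F (θ/2))) :=
    half_point_lemma θ hθ F hF0 hF1 hFrange hconc p hpmem
  calc (∫ z in (0:ℝ)..θ, x z * (z * f z - (1 - F z)))
      = _ + _ := hsplit
    _ ≤ 0 + π p := add_le_add hpiece1 hpiece2
    _ = π p := by ring
    _ ≤ _ := hπp_le

end Aux

/-- **Half approximation in sequential screening.**
In the sequential screening problem with ex-post participation constraints,
with interim types `k` of probability `α k > 0`, ex-post value CDFs `F k` on
`[0, θ̄]` with densities `f k`, and concave profit functions
`π k p = p (1 - F k p)` (common bounded support), the optimal static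
(uniform-price) profit is at least one half of the optimal sequential
screening profit. -/
theorem sequential_screening_half_approximation
    (K : ℕ) (hK : 1 ≤ K) (θ : ℝ) (hθ : 0 < θ)
    (α : Fin K → ℝ) (hα : ∀ k, 0 < α k) (hsum : ∑ k, α k = 1)
    (F f : Fin K → ℝ → ℝ)
    (hF0 : ∀ k, F k 0 = 0) (hF1 : ∀ k, F k θ = 1)
    (hderiv : ∀ k, ∀ z ∈ Set.Icc (0:ℝ) θ, HasDerivAt (F k) (f k z) z)
    (hfcont : ∀ k, ContinuousOn (f k) (Set.Icc 0 θ))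
    (hFrange : ∀ k, ∀ z ∈ Set.Icc (0:ℝ) θ, F k z ∈ Set.Icc (0:ℝ) 1)
    (hconc : ∀ k, ConcaveOn ℝ (Set.Icc 0 θ) (fun p => p * (1 - F k p))) :
    sSup ((fun p => ∑ k, α k * (p * (1 - F k p))) '' Set.Icc 0 θ)
      ≥ (1 / 2) * sSup {w : ℝ | ∃ (u : Fin K → ℝ) (x : Fin K → ℝ → ℝ),
          (∀ k, 0 ≤ u k) ∧
          (∀ k, MonotoneOn (x k) (Set.Icc 0 θ)) ∧
          (∀ k, ∀ z ∈ Set.Icc (0:ℝ) θ, x k z ∈ Set.Icc (0:ℝ) 1) ∧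
          (∀ k k' : Fin K,
            u k + ∫ z in (0:ℝ)..θ, x k z * (1 - F k z)
              ≥ u k' + ∫ z in (0:ℝ)..θ, x k' z * (1 - F k z)) ∧
          w = ∑ k, α k * (-(u k) +
              ∫ z in (0:ℝ)..θ, x k z * (z * f k z - (1 - F k z)))} := by
  set Φ : ℝ → ℝ := fun p => ∑ k, α k * (p * (1 - F k p)) with hΦ_def
  have hhalfmem : (θ/2) ∈ Set.Icc (0:ℝ) θ := ⟨by linarith, by linarith⟩
  -- continuity and boundedness of the static profit
  have hFcont : ∀ k, ContinuousOn (F k) (Set.Icc (0:ℝ) θ) :=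
    fun k z hz => ((hderiv k z hz).continuousAt).continuousWithinAt
  have hΦcont : ContinuousOn Φ (Set.Icc (0:ℝ) θ) := by
    apply continuousOn_finset_sum
    intro k _
    exact continuousOn_const.mul (continuousOn_id.mul (continuousOn_const.sub (hFcont k)))
  have hbdd : BddAbove (Φ '' Set.Icc (0:ℝ) θ) :=
    (isCompact_Icc.image_of_continuousOn hΦcont).bddAbove
  have h1 : Φ (θ/2) ≤ sSup (Φ '' Set.Icc (0:ℝ) θ) :=
    le_csSup hbdd ⟨θ/2, hhalfmem, rfl⟩
  -- nonnegativity of Φ (θ/2)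
  have hΦnn : 0 ≤ Φ (θ/2) := by
    apply Finset.sum_nonneg
    intro k _
    have := hFrange k (θ/2) hhalfmem
    have h1' : 0 ≤ 1 - F k (θ/2) := by linarith [this.2]
    exact mul_nonneg (hα k).le (mul_nonneg (by linarith : (0:ℝ) ≤ θ/2) h1')
  -- every feasible sequential profit is at most 2 * Φ (θ/2)
  have h2 : ∀ w ∈ {w : ℝ | ∃ (u : Fin K → ℝ) (x : Fin K → ℝ → ℝ),
          (∀ k, 0 ≤ u k) ∧
          (∀ k, MonotoneOn (x k) (Set.Icc 0 θ)) ∧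
          (∀ k, ∀ z ∈ Set.Icc (0:ℝ) θ, x k z ∈ Set.Icc (0:ℝ) 1) ∧
          (∀ k k' : Fin K,
            u k + ∫ z in (0:ℝ)..θ, x k z * (1 - F k z)
              ≥ u k' + ∫ z in (0:ℝ)..θ, x k' z * (1 - F k z)) ∧
          w = ∑ k, α k * (-(u k) +
              ∫ z in (0:ℝ)..θ, x k z * (z * f k z - (1 - F k z)))},
      w ≤ 2 * Φ (θ/2) := by
    rintro w ⟨u, x, hu, hmono, hxr, _, rfl⟩
    have hterm : ∀ k, α k * (-(u k) +
        ∫ z in (0:ℝ)..θ, x k z * (z * f k z - (1 - F k z)))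
        ≤ α k * (2 * ((θ/2) * (1 - F k (θ/2)))) := by
      intro k
      apply mul_le_mul_of_nonneg_left _ (hα k).le
      have hkey := key_integral_bound θ hθ (F k) (f k) (x k) (hF0 k) (hF1 k)
        (hderiv k) (hfcont k) (hFrange k) (hconc k) (hmono k) (hxr k)
      linarith [hu k]
    calc (∑ k, α k * (-(u k) + ∫ z in (0:ℝ)..θ, x k z * (z * f k z - (1 - F k z))))
        ≤ ∑ k, α k * (2 * ((θ/2) * (1 - F k (θ/2)))) :=
          Finset.sum_le_sum (fun k _ => hterm k)
      _ = 2 * Φ (θ/2) := by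
          rw [hΦ_def, Finset.mul_sum]
          congr 1; ext k; ring
  have h3 : sSup {w : ℝ | ∃ (u : Fin K → ℝ) (x : Fin K → ℝ → ℝ),
          (∀ k, 0 ≤ u k) ∧
          (∀ k, MonotoneOn (x k) (Set.Icc 0 θ)) ∧
          (∀ k, ∀ z ∈ Set.Icc (0:ℝ) θ, x k z ∈ Set.Icc (0:ℝ) 1) ∧
          (∀ k k' : Fin K,
            u k + ∫ z in (0:ℝ)..θ, x k z * (1 - F k z)
              ≥ u k' + ∫ z in (0:ℝ)..θ, x k' z * (1 - F k z)) ∧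
          w = ∑ k, α k * (-(u k) +
              ∫ z in (0:ℝ)..θ, x k z * (z * f k z - (1 - F k z)))}
      ≤ 2 * Φ (θ/2) := Real.sSup_le h2 (by linarith)
  linarith
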